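/- Define g(x) = (x+1) log₂(x+1) − x log₂ x for x > 0. For fixed η ∈ [0,1] and N > 0, the function F(η₁) = g((η + (1−η)η₁)N) + g((η + (1−η)(1−η₁))N) − g((1−η)η₁ N) − g((1−η)(1−η₁)N) is symmetric under η₁ ↦ 1−η₁, and (being convex on (0,1)) attains its minimum on [0,1] at η₁ = 1/2, with minimum value 2[g((1+η)N/2) − g((1−η)N/2)]. -/

import Mathlib

/-- Entropy of a thermal bosonic state with mean photon number x (in bits),
g(x) = (x+1)log₂(x+1) − x log₂ x. -/
noncomputable def g (x : ℝ) : ℝ := (x + 1) * Real.logb 2 (x + 1) - x * Real.logb 2 x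

/-- The squashed-entanglement objective for the pure-loss channel with squashing
beamsplitter of transmissivity η₁. -/
noncomputable def Fobj (η N η₁ : ℝ) : ℝ :=
  g ((η + (1 - η) * η₁) * N) + g ((η + (1 - η) * (1 - η₁)) * N)
    - g ((1 - η) * η₁ * N) - g ((1 - η) * (1 - η₁) * N)

/-- Natural-log version of `g`. -/
noncomputable def Gg (x : ℝ) : ℝ := (x + 1) * Real.log (x + 1) - x * Real.log x

lemma g_eq (x : ℝ) : g x = Gg x / Real.log 2 := by
  unfold g Gg Real.logb
  ring

lemma Gg_continuousOn : ContinuousOn Gg (Set.Ici (0:ℝ)) := by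
  have h1 : ContinuousOn (fun x : ℝ => (x+1) * Real.log (x+1)) (Set.Ici (0:ℝ)) := by
    apply ContinuousOn.mul (by fun_prop)
    intro x hx
    have hx' : (0:ℝ) ≤ x := hx
    exact ((Real.continuousAt_log (by linarith)).comp
      (by fun_prop : ContinuousAt (fun x : ℝ => x + 1) x)).continuousWithinAt
  have h2 : Continuous (fun x : ℝ => x * Real.log x) := by
    have := Real.continuous_negMulLog
    have : Continuous (fun x : ℝ => -Real.negMulLog x) := this.neg
    convert this using 1
    funext x
    simp [Real.negMulLog]
  exact h1.sub h2.continuousOn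

lemma Gg_hasDerivAt {x : ℝ} (hx : 0 < x) :
    HasDerivAt Gg (Real.log (x+1) - Real.log x) x := by
  have h1 : HasDerivAt (fun y : ℝ => (y+1) * Real.log (y+1))
      ((Real.log (x+1) + 1) * 1) x := by
    exact (Real.hasDerivAt_mul_log (x := x+1) (by linarith)).comp x
      ((hasDerivAt_id x).add_const 1)
  have h2 : HasDerivAt (fun y : ℝ => y * Real.log y) (Real.log x + 1) x :=
    Real.hasDerivAt_mul_log hx.ne'
  have h3 := h1.sub h2
  have : (Real.log (x+1) + 1) * 1 - (Real.log x + 1) = Real.log (x+1) - Real.log x := by ring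
  rw [this] at h3
  exact h3

/-- Monotonicity of ψ(x) = G(x+u)+G(x−u)−2G(x) on [u, ∞). -/
lemma psi_mono {u A B : ℝ} (hu : 0 ≤ u) (hB : u ≤ B) (hAB : B ≤ A) :
    Gg (B+u) + Gg (B-u) - 2 * Gg B ≤ Gg (A+u) + Gg (A-u) - 2 * Gg A := by
  set f : ℝ → ℝ := fun x => Gg (x+u) + Gg (x-u) - 2 * Gg x with hf
  have hB0 : 0 ≤ B := le_trans hu hB
  have hmono : MonotoneOn f (Set.Icc B A) := by
    apply monotoneOn_of_deriv_nonneg (convex_Icc B A)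
    · -- continuity
      have c1 : ContinuousOn (fun x : ℝ => Gg (x+u)) (Set.Icc B A) := by
        apply Gg_continuousOn.comp (by fun_prop)
        intro x hx
        simp only [Set.mem_Ici]
        have := hx.1
        linarith
      have c2 : ContinuousOn (fun x : ℝ => Gg (x-u)) (Set.Icc B A) := by
        apply Gg_continuousOn.comp (by fun_prop)
        intro x hx
        simp only [Set.mem_Ici]
        have := hx.1
        linarith
      have c3 : ContinuousOn (fun x : ℝ => Gg x) (Set.Icc B A) := by
        apply Gg_continuousOn.mono
        intro x hx
        exact le_trans hB0 hx.1
      exact (c1.add c2).sub (c3.const_smul (2:ℝ))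
    · -- differentiability on interior
      rw [interior_Icc]
      intro x hx
      have hx1 : B < x := hx.1
      have hxu : 0 < x - u := by linarith
      have hx0 : 0 < x := by linarith
      have hxpu : 0 < x + u := by linarith
      have d1 : HasDerivAt (fun y : ℝ => Gg (y+u))
          ((Real.log (x+u+1) - Real.log (x+u)) * 1) x :=
        (Gg_hasDerivAt hxpu).comp (h₂ := Gg) x ((hasDerivAt_id x).add_const u)
      have d2 : HasDerivAt (fun y : ℝ => Gg (y-u))
          ((Real.log (x-u+1) - Real.log (x-u)) * 1) x :=
        (Gg_hasDerivAt hxu).comp (h₂ := Gg) x ((hasDerivAt_id x).sub_const u)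
      have d3 : HasDerivAt Gg (Real.log (x+1) - Real.log x) x := Gg_hasDerivAt hx0
      exact ((d1.add d2).sub (d3.const_mul 2)).differentiableAt.differentiableWithinAt
    · -- derivative nonneg
      rw [interior_Icc]
      intro x hx
      have hx1 : B < x := hx.1
      have hxu : 0 < x - u := by linarith
      have hx0 : 0 < x := by linarith
      have hxpu : 0 < x + u := by linarith
      have d1 : HasDerivAt (fun y : ℝ => Gg (y+u))
          ((Real.log (x+u+1) - Real.log (x+u)) * 1) x :=
        (Gg_hasDerivAt hxpu).comp (h₂ := Gg) x ((hasDerivAt_id x).add_const u)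
      have d2 : HasDerivAt (fun y : ℝ => Gg (y-u))
          ((Real.log (x-u+1) - Real.log (x-u)) * 1) x :=
        (Gg_hasDerivAt hxu).comp (h₂ := Gg) x ((hasDerivAt_id x).sub_const u)
      have d3 : HasDerivAt Gg (Real.log (x+1) - Real.log x) x := Gg_hasDerivAt hx0
      have df : HasDerivAt f
          ((Real.log (x+u+1) - Real.log (x+u)) * 1 + (Real.log (x-u+1) - Real.log (x-u)) * 1
            - 2 * (Real.log (x+1) - Real.log x)) x :=
        (d1.add d2).sub (d3.const_mul 2)
      rw [df.deriv]
      -- show the derivative is nonnegative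
      have hp1 : (0:ℝ) < x+u+1 := by linarith
      have hq1 : (0:ℝ) < x-u+1 := by linarith
      have hx1' : (0:ℝ) < x+1 := by linarith
      have key : Real.log ((x+u) * ((x-u) * ((x+1) * (x+1))))
          ≤ Real.log ((x+u+1) * ((x-u+1) * (x * x))) := by
        apply Real.log_le_log (by positivity)
        nlinarith [sq_nonneg u, hx0]
      rw [Real.log_mul (by positivity) (by positivity),
        Real.log_mul (by positivity) (by positivity),
        Real.log_mul (by positivity) (by positivity),
        Real.log_mul (by positivity) (by positivity),
        Real.log_mul (by positivity) (by positivity),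
        Real.log_mul (by positivity) (by positivity)] at key
      linarith
  have h1 : B ∈ Set.Icc B A := ⟨le_refl B, hAB⟩
  have h2 : A ∈ Set.Icc B A := ⟨hAB, le_refl A⟩
  exact hmono h1 h2 hAB

/-- **Symmetry and minimum at η₁ = 1/2**: F is symmetric under η₁ ↦ 1−η₁ and attains its
minimum on [0,1] at η₁ = 1/2, with value 2[g((1+η)N/2) − g((1−η)N/2)]. -/
theorem Fobj_min_at_half (η N : ℝ) (hη : η ∈ Set.Icc (0 : ℝ) 1) (hN : 0 < N) :
    (∀ η₁ : ℝ, Fobj η N (1 - η₁) = Fobj η N η₁) ∧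
    (∀ η₁ ∈ Set.Icc (0 : ℝ) 1, Fobj η N (1 / 2) ≤ Fobj η N η₁) ∧
    Fobj η N (1 / 2) = 2 * (g ((1 + η) * N / 2) - g ((1 - η) * N / 2)) := by
  obtain ⟨hη0, hη1⟩ := hη
  have hlog2 : 0 < Real.log 2 := Real.log_pos one_lt_two
  refine ⟨?_, ?_, ?_⟩
  · intro η₁
    have h : 1 - (1 - η₁) = η₁ := by ring
    rw [Fobj, Fobj, h]
    ring
  · intro t ht
    obtain ⟨ht0, ht1⟩ := ht
    have hm0 : 0 ≤ (1-η)*N := mul_nonneg (by linarith) hN.le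
    have ha0 : 0 ≤ η*N := mul_nonneg hη0 hN.le
    set u := |(t - 1/2) * ((1-η)*N)| with hu
    have hu0 : 0 ≤ u := abs_nonneg _
    have huB : u ≤ (1-η)*N/2 := by
      rw [hu, abs_mul, abs_of_nonneg hm0]
      have h12 : |t - 1/2| ≤ 1/2 := abs_le.mpr ⟨by linarith, by linarith⟩
      nlinarith [abs_nonneg (t - 1/2)]
    have hAB : (1-η)*N/2 ≤ η*N + (1-η)*N/2 := by linarith
    have key := psi_mono hu0 huB hAB
    have hFhalf : Fobj η N (1/2)
        = (2 * Gg (η*N + (1-η)*N/2) - 2 * Gg ((1-η)*N/2)) / Real.log 2 := by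
      rw [Fobj]
      have e1 : (η + (1-η)*(1/2))*N = η*N + (1-η)*N/2 := by ring
      have e2 : (η + (1-η)*(1-1/2))*N = η*N + (1-η)*N/2 := by ring
      have e3 : (1-η)*(1/2)*N = (1-η)*N/2 := by ring
      have e4 : (1-η)*(1-1/2)*N = (1-η)*N/2 := by ring
      rw [e1, e2, e3, e4, g_eq, g_eq]
      ring
    have hFt : Fobj η N t
        = (Gg (η*N + (1-η)*N/2 + u) + Gg (η*N + (1-η)*N/2 - u)
            - Gg ((1-η)*N/2 + u) - Gg ((1-η)*N/2 - u)) / Real.log 2 := by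
      rcases le_or_gt (1/2) t with h | h
      · have hu' : u = (t-1/2)*((1-η)*N) := by
          rw [hu]; exact abs_of_nonneg (mul_nonneg (by linarith) hm0)
        rw [Fobj]
        have e1 : (η + (1-η)*t)*N = η*N + (1-η)*N/2 + u := by rw [hu']; ring
        have e2 : (η + (1-η)*(1-t))*N = η*N + (1-η)*N/2 - u := by rw [hu']; ring
        have e3 : (1-η)*t*N = (1-η)*N/2 + u := by rw [hu']; ring
        have e4 : (1-η)*(1-t)*N = (1-η)*N/2 - u := by rw [hu']; ring
        rw [e1, e2, e3, e4, g_eq, g_eq, g_eq, g_eq]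
        ring
      · have hu' : u = -((t-1/2)*((1-η)*N)) := by
          rw [hu]
          exact abs_of_nonpos (mul_nonpos_of_nonpos_of_nonneg (by linarith) hm0)
        rw [Fobj]
        have e1 : (η + (1-η)*t)*N = η*N + (1-η)*N/2 - u := by rw [hu']; ring
        have e2 : (η + (1-η)*(1-t))*N = η*N + (1-η)*N/2 + u := by rw [hu']; ring
        have e3 : (1-η)*t*N = (1-η)*N/2 - u := by rw [hu']; ring
        have e4 : (1-η)*(1-t)*N = (1-η)*N/2 + u := by rw [hu']; ring
        rw [e1, e2, e3, e4, g_eq, g_eq, g_eq, g_eq]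
        ring
    rw [hFhalf, hFt]
    apply div_le_div_of_nonneg_right ?_ hlog2.le
    linarith
  · rw [Fobj]
    have e1 : (η + (1-η)*(1/2))*N = (1+η)*N/2 := by ring
    have e2 : (η + (1-η)*(1-1/2))*N = (1+η)*N/2 := by ring
    have e3 : (1-η)*(1/2)*N = (1-η)*N/2 := by ring
    have e4 : (1-η)*(1-1/2)*N = (1-η)*N/2 := by ring
    rw [e1, e2, e3, e4]
    ring
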